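/- Let K be a field of characteristic 0 and let m ≥ 2 be an integer. For every formal power series φ(x) ∈ x^m + x^{m+1}K[[x]] (i.e., φ has zero coefficients in degrees < m, coefficient 1 in degree m), there exists a unique formal power series f(x) ∈ x + x^2K[[x]] (i.e., f has zero constant term and linear coefficient 1) satisfying φ(f(x)) = f(x^m) as formal power series. -/

import Mathlib

/-- Composition `f(g(x))` of formal power series, intended for `g` with zero
constant coefficient (in which case the truncated sum below computes the
`n`-th coefficient of the substitution of `g` into `f`). -/
noncomputable def PowerSeries.comp {K : Type*} [CommSemiring K] (f g : PowerSeries K) :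
    PowerSeries K :=
  PowerSeries.mk fun n =>
    PowerSeries.coeff n
      (∑ k ∈ Finset.range (n + 1), PowerSeries.C (PowerSeries.coeff k f) * g ^ k)

open PowerSeries Finset

section Helpers
variable {K : Type*} [CommRing K]

lemma mul_vanish {u v : PowerSeries K} {p q : ℕ}
    (hu : ∀ a < p, PowerSeries.coeff a u = 0) (hv : ∀ b < q, PowerSeries.coeff b v = 0) :
    ∀ n < p + q, PowerSeries.coeff n (u * v) = 0 := by
  intro n hn
  rw [PowerSeries.coeff_mul]
  apply Finset.sum_eq_zero
  rintro ⟨a, b⟩ hab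
  rw [Finset.HasAntidiagonal.mem_antidiagonal] at hab
  rcases lt_or_ge a p with h | h
  · simp [hu a h]
  · have : b < q := by omega
    simp [hv b this]

lemma coeff_mul_order {u v : PowerSeries K} {p q : ℕ}
    (hu : ∀ a < p, PowerSeries.coeff a u = 0) (hv : ∀ b < q, PowerSeries.coeff b v = 0) :
    PowerSeries.coeff (p + q) (u * v) = PowerSeries.coeff p u * PowerSeries.coeff q v := by
  rw [PowerSeries.coeff_mul]
  rw [Finset.sum_eq_single (p, q)]
  · rintro ⟨a, b⟩ hab hne
    rw [Finset.HasAntidiagonal.mem_antidiagonal] at hab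
    rcases lt_or_ge a p with h | h
    · simp [hu a h]
    · have : b < q ∨ (a = p ∧ b = q) := by omega
      rcases this with h' | ⟨rfl, rfl⟩
      · simp [hv b h']
      · exact absurd rfl hne
  · intro h
    simp at h

lemma pow_vanish {f : PowerSeries K} (hf : PowerSeries.coeff 0 f = 0) (k : ℕ) :
    ∀ n < k, PowerSeries.coeff n (f ^ k) = 0 := by
  have hX : (PowerSeries.X : PowerSeries K) ∣ f := by
    rw [PowerSeries.X_dvd_iff]
    simpa using hf
  have := pow_dvd_pow_of_dvd hX k
  exact PowerSeries.X_pow_dvd_iff.mp this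

lemma coeff_pow_self {f : PowerSeries K} (hf : PowerSeries.coeff 0 f = 0) (k : ℕ) :
    PowerSeries.coeff k (f ^ k) = (PowerSeries.coeff 1 f) ^ k := by
  induction k with
  | zero => simp
  | succ k ih =>
    have : f ^ (k + 1) = f * f ^ k := by ring
    rw [this, show k + 1 = 1 + k by omega,
      coeff_mul_order (p := 1) (q := k) (by intro a ha; interval_cases a; exact hf)
        (pow_vanish hf k), ih]
    ring
end Helpers

section Comp
variable {K : Type*} [CommRing K]

lemma coeff_comp' (φ g : PowerSeries K) (n : ℕ) :
    PowerSeries.coeff n (φ.comp g) =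
      ∑ k ∈ Finset.range (n + 1), PowerSeries.coeff k φ * PowerSeries.coeff n (g ^ k) := by
  simp [PowerSeries.comp, PowerSeries.coeff_mk, map_sum, PowerSeries.coeff_C_mul]

lemma coeff_comp_X_pow (f : PowerSeries K) {m : ℕ} (hm : 1 ≤ m) (n : ℕ) :
    PowerSeries.coeff n (f.comp (PowerSeries.X ^ m)) =
      if m ∣ n then PowerSeries.coeff (n / m) f else 0 := by
  rw [coeff_comp']
  have hterm : ∀ k : ℕ, PowerSeries.coeff k f *
      PowerSeries.coeff n (((PowerSeries.X : PowerSeries K) ^ m) ^ k) =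
      if n = m * k then PowerSeries.coeff k f else 0 := by
    intro k
    rw [← pow_mul, PowerSeries.coeff_X_pow]
    split_ifs <;> simp_all
  simp_rw [hterm]
  by_cases hd : m ∣ n
  · rw [if_pos hd]
    rw [Finset.sum_eq_single (n / m)]
    · rw [if_pos (Nat.mul_div_cancel' hd).symm]
    · intro k _ hk
      rw [if_neg]
      rintro rfl
      exact hk (Nat.mul_div_cancel_left k (by omega)).symm
    · intro h
      exact absurd (Finset.mem_range.2 (by have := Nat.div_le_self n m; omega)) h
  · rw [if_neg hd]
    apply Finset.sum_eq_zero
    intro k _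
    rw [if_neg]
    intro hc
    exact hd ⟨k, hc⟩
end Comp

section Key
variable {K : Type*} [CommRing K]

-- geometric sum S = ∑ i<k, f^i g^(k-1-i) vanishes below k-1
lemma geom_vanish {f g : PowerSeries K} (hf0 : PowerSeries.coeff 0 f = 0)
    (hg0 : PowerSeries.coeff 0 g = 0) (k : ℕ) :
    ∀ b < k - 1, PowerSeries.coeff b (∑ i ∈ Finset.range k, f ^ i * g ^ (k - 1 - i)) = 0 := by
  intro b hb
  rw [map_sum]
  apply Finset.sum_eq_zero
  intro i hi
  rw [Finset.mem_range] at hi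
  have h1 : i + (k - 1 - i) = k - 1 := by omega
  exact mul_vanish (pow_vanish hf0 i) (pow_vanish hg0 (k - 1 - i)) b (by omega)

lemma coeff_pow_diff_high {f g : PowerSeries K} {j : ℕ}
    (hf0 : PowerSeries.coeff 0 f = 0) (hg0 : PowerSeries.coeff 0 g = 0)
    (hagree : ∀ i < j, PowerSeries.coeff i f = PowerSeries.coeff i g)
    {k n' : ℕ} (hk : n' + 2 ≤ k) :
    PowerSeries.coeff (j + n') (f ^ k) = PowerSeries.coeff (j + n') (g ^ k) := by
  have hgeo := geom_sum₂_mul f g k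
  have : PowerSeries.coeff (j + n') (f ^ k - g ^ k) = 0 := by
    rw [← hgeo]
    have := mul_vanish (u := ∑ i ∈ Finset.range k, f ^ i * g ^ (k - 1 - i)) (v := f - g)
      (p := k - 1) (q := j) (geom_vanish hf0 hg0 k)
      (fun b hb => by rw [map_sub, hagree b hb, sub_self]) (j + n') (by omega)
    exact this
  rw [map_sub, sub_eq_zero] at this
  exact this

lemma coeff_pow_diff_eq {f g : PowerSeries K} {j : ℕ}
    (hf0 : PowerSeries.coeff 0 f = 0) (hg0 : PowerSeries.coeff 0 g = 0)
    (hf1 : PowerSeries.coeff 1 f = 1) (hg1 : PowerSeries.coeff 1 g = 1)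
    (hagree : ∀ i < j, PowerSeries.coeff i f = PowerSeries.coeff i g) (n' : ℕ) :
    PowerSeries.coeff (j + n') (f ^ (n' + 1)) =
      PowerSeries.coeff (j + n') (g ^ (n' + 1)) +
        (n' + 1 : ℕ) * (PowerSeries.coeff j f - PowerSeries.coeff j g) := by
  have hgeo := geom_sum₂_mul f g (n' + 1)
  have hS : ∀ b < n', PowerSeries.coeff b
      (∑ i ∈ Finset.range (n' + 1), f ^ i * g ^ (n' + 1 - 1 - i)) = 0 := by
    simpa using geom_vanish hf0 hg0 (n' + 1)
  have hd : ∀ b < j, PowerSeries.coeff b (f - g) = 0 :=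
    fun b hb => by rw [map_sub, hagree b hb, sub_self]
  have hmain : PowerSeries.coeff (j + n') (f ^ (n' + 1) - g ^ (n' + 1)) =
      (n' + 1 : ℕ) * (PowerSeries.coeff j f - PowerSeries.coeff j g) := by
    rw [← hgeo, show j + n' = n' + j by omega, coeff_mul_order hS hd]
    have hSn : PowerSeries.coeff n'
        (∑ i ∈ Finset.range (n' + 1), f ^ i * g ^ (n' + 1 - 1 - i)) = (n' + 1 : ℕ) := by
      rw [map_sum]
      have hterm : ∀ i ∈ Finset.range (n' + 1),
          PowerSeries.coeff n' (f ^ i * g ^ (n' + 1 - 1 - i)) = 1 := by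
        intro i hi
        rw [Finset.mem_range] at hi
        have h1 : i + (n' - i) = n' := by omega
        have h2 : n' + 1 - 1 - i = n' - i := by omega
        have h3 := coeff_mul_order (pow_vanish hf0 i) (pow_vanish hg0 (n' - i))
        rw [h1] at h3
        rw [h2, h3, coeff_pow_self hf0, coeff_pow_self hg0, hf1, hg1, one_pow, one_pow,
          one_mul]
      rw [Finset.sum_congr rfl hterm]
      simp
    rw [hSn, map_sub]
  rw [map_sub] at hmain
  linear_combination hmain

lemma key_comp {m j : ℕ} (hm : 2 ≤ m) (hj : 1 ≤ j) (φ f g : PowerSeries K)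
    (hφlow : ∀ k < m, PowerSeries.coeff k φ = 0)
    (hφlead : PowerSeries.coeff m φ = 1)
    (hf0 : PowerSeries.coeff 0 f = 0) (hg0 : PowerSeries.coeff 0 g = 0)
    (hf1 : PowerSeries.coeff 1 f = 1) (hg1 : PowerSeries.coeff 1 g = 1)
    (hagree : ∀ i < j, PowerSeries.coeff i f = PowerSeries.coeff i g) :
    PowerSeries.coeff (j + (m - 1)) (φ.comp f) =
      PowerSeries.coeff (j + (m - 1)) (φ.comp g) +
        (m : K) * (PowerSeries.coeff j f - PowerSeries.coeff j g) := by
  rw [coeff_comp', coeff_comp']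
  have hmem : m ∈ Finset.range (j + (m - 1) + 1) := Finset.mem_range.2 (by omega)
  rw [← Finset.sum_erase_add _ _ hmem, ← Finset.sum_erase_add _ _ hmem]
  have heq : ∀ k ∈ (Finset.range (j + (m - 1) + 1)).erase m,
      PowerSeries.coeff k φ * PowerSeries.coeff (j + (m - 1)) (f ^ k) =
      PowerSeries.coeff k φ * PowerSeries.coeff (j + (m - 1)) (g ^ k) := by
    intro k hk
    rw [Finset.mem_erase, Finset.mem_range] at hk
    rcases lt_or_ge k m with h | h
    · rw [hφlow k h, zero_mul, zero_mul]
    · have hk2 : (m - 1) + 2 ≤ k := by omega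
      rw [coeff_pow_diff_high hf0 hg0 hagree hk2]
  rw [Finset.sum_congr rfl heq]
  have hmterm : PowerSeries.coeff (j + (m - 1)) (f ^ m) =
      PowerSeries.coeff (j + (m - 1)) (g ^ m) +
        (m : K) * (PowerSeries.coeff j f - PowerSeries.coeff j g) := by
    have := coeff_pow_diff_eq hf0 hg0 hf1 hg1 hagree (m - 1)
    rw [show m - 1 + 1 = m by omega] at this
    exact this
  rw [hφlead, one_mul, one_mul, hmterm]
  ring
end Key

section Main
variable {K : Type*} [Field K]

noncomputable def bcoef (φ : PowerSeries K) (m : ℕ) : ℕ → K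
  | 0 => 0
  | 1 => 1
  | (j + 2) =>
    (m : K)⁻¹ *
      (PowerSeries.coeff (j + 2 + (m - 1))
          ((PowerSeries.mk fun i => if h : i < j + 2 then bcoef φ m i else 0).comp
            (PowerSeries.X ^ m))
        - PowerSeries.coeff (j + 2 + (m - 1))
          (φ.comp (PowerSeries.mk fun i => if h : i < j + 2 then bcoef φ m i else 0)))
  termination_by j => j
  decreasing_by all_goals omega

/-- Truncation of the Böttcher series below `j`. -/
noncomputable def btrunc (φ : PowerSeries K) (m j : ℕ) : PowerSeries K :=
  PowerSeries.mk fun i => if i < j then bcoef φ m i else 0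

lemma bcoef_succ_succ (φ : PowerSeries K) (m j : ℕ) :
    bcoef φ m (j + 2) = (m : K)⁻¹ *
      (PowerSeries.coeff (j + 2 + (m - 1)) ((btrunc φ m (j + 2)).comp (PowerSeries.X ^ m))
        - PowerSeries.coeff (j + 2 + (m - 1)) (φ.comp (btrunc φ m (j + 2)))) := by
  rw [bcoef, btrunc]
  simp only [dite_eq_ite]
end Main

section Main2
variable {K : Type*} [Field K] [CharZero K]

lemma div_lt_aux {m j : ℕ} (hm : 2 ≤ m) (hj : 2 ≤ j) : (j + (m - 1)) / m < j := by
  rw [Nat.div_lt_iff_lt_mul (by omega)]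
  have := Nat.add_le_mul hj hm
  omega

lemma bcoef_zero (φ : PowerSeries K) (m : ℕ) : bcoef φ m 0 = 0 := by rw [bcoef]

lemma bcoef_one (φ : PowerSeries K) (m : ℕ) : bcoef φ m 1 = 1 := by rw [bcoef]

lemma solutions_agree {m : ℕ} (hm : 2 ≤ m) (φ : PowerSeries K)
    (hφlow : ∀ k < m, PowerSeries.coeff k φ = 0)
    (hφlead : PowerSeries.coeff m φ = 1) {f g : PowerSeries K}
    (hf0 : PowerSeries.coeff 0 f = 0) (hf1 : PowerSeries.coeff 1 f = 1)
    (hfeq : φ.comp f = f.comp (PowerSeries.X ^ m))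
    (hg0 : PowerSeries.coeff 0 g = 0) (hg1 : PowerSeries.coeff 1 g = 1)
    (hgeq : φ.comp g = g.comp (PowerSeries.X ^ m)) : f = g := by
  ext n
  induction n using Nat.strong_induction_on with
  | _ j ih =>
    match j, ih with
    | 0, _ => rw [hf0, hg0]
    | 1, _ => rw [hf1, hg1]
    | (j' + 2), ih =>
      set j := j' + 2 with hjdef
      have hagree : ∀ i < j, PowerSeries.coeff i f = PowerSeries.coeff i g :=
        fun i hi => ih i hi
      have hkey := key_comp hm (by omega : 1 ≤ j) φ f g hφlow hφlead hf0 hg0 hf1 hg1 hagree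
      have hrhs : PowerSeries.coeff (j + (m - 1)) (f.comp (PowerSeries.X ^ m)) =
          PowerSeries.coeff (j + (m - 1)) (g.comp (PowerSeries.X ^ m)) := by
        rw [coeff_comp_X_pow f (by omega), coeff_comp_X_pow g (by omega)]
        split_ifs with h
        · exact hagree _ (div_lt_aux hm (by omega))
        · rfl
      rw [← hfeq, ← hgeq, hkey] at hrhs
      have hm0 : (m : K) ≠ 0 := Nat.cast_ne_zero.2 (by omega)
      have h0 : (m : K) * (PowerSeries.coeff j f - PowerSeries.coeff j g) = 0 :=
        add_eq_left.1 hrhs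
      rcases mul_eq_zero.1 h0 with h | h
      · exact absurd h hm0
      · exact sub_eq_zero.1 h
end Main2

section Main3
variable {K : Type*} [Field K] [CharZero K]

lemma bsol_eq {m : ℕ} (hm : 2 ≤ m) (φ : PowerSeries K)
    (hφlow : ∀ k < m, PowerSeries.coeff k φ = 0)
    (hφlead : PowerSeries.coeff m φ = 1) :
    φ.comp (PowerSeries.mk (bcoef φ m)) =
      (PowerSeries.mk (bcoef φ m)).comp (PowerSeries.X ^ m) := by
  set f : PowerSeries K := PowerSeries.mk (bcoef φ m) with hfdef
  have hf0 : PowerSeries.coeff 0 f = 0 := by rw [hfdef, PowerSeries.coeff_mk, bcoef_zero]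
  have hf1 : PowerSeries.coeff 1 f = 1 := by rw [hfdef, PowerSeries.coeff_mk, bcoef_one]
  ext n
  rcases lt_trichotomy n m with hn | hn | hn
  · -- n < m
    rw [coeff_comp', coeff_comp_X_pow f (by omega)]
    rw [Finset.sum_eq_zero (fun k hk => by
      rw [Finset.mem_range] at hk
      rw [hφlow k (by omega), zero_mul])]
    split_ifs with h
    · have hn0 : n = 0 := Nat.eq_zero_of_dvd_of_lt h hn
      subst hn0
      simp [hf0]
    · rfl
  · -- n = m
    rw [hn]
    rw [coeff_comp', coeff_comp_X_pow f (by omega), if_pos dvd_rfl,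
      Nat.div_self (by omega : 0 < m)]
    rw [Finset.sum_eq_single m]
    · rw [hφlead, one_mul, coeff_pow_self hf0, hf1, one_pow]
    · intro k hk hkm
      rw [Finset.mem_range] at hk
      rw [hφlow k (by omega), zero_mul]
    · intro h
      exact absurd (Finset.mem_range.2 (by omega)) h
  · -- n > m
    obtain ⟨j, hj2, hn'⟩ : ∃ j, 2 ≤ j ∧ n = j + (m - 1) := ⟨n - m + 1, by omega, by omega⟩
    set F : PowerSeries K := btrunc φ m j with hFdef
    have hF0 : PowerSeries.coeff 0 F = 0 := by
      rw [hFdef, btrunc, PowerSeries.coeff_mk, if_pos (by omega), bcoef_zero]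
    have hF1 : PowerSeries.coeff 1 F = 1 := by
      rw [hFdef, btrunc, PowerSeries.coeff_mk, if_pos (by omega), bcoef_one]
    have hagree : ∀ i < j, PowerSeries.coeff i f = PowerSeries.coeff i F := by
      intro i hi
      rw [hfdef, hFdef, btrunc, PowerSeries.coeff_mk, PowerSeries.coeff_mk, if_pos hi]
    have hkey := key_comp hm (by omega : 1 ≤ j) φ f F hφlow hφlead hf0 hF0 hf1 hF1 hagree
    have hFj : PowerSeries.coeff j F = 0 := by
      rw [hFdef, btrunc, PowerSeries.coeff_mk, if_neg (lt_irrefl j)]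
    have hm0 : (m : K) ≠ 0 := Nat.cast_ne_zero.2 (by omega)
    have hcj : (m : K) * bcoef φ m j =
        PowerSeries.coeff (j + (m - 1)) (F.comp (PowerSeries.X ^ m)) -
          PowerSeries.coeff (j + (m - 1)) (φ.comp F) := by
      obtain ⟨j', rfl⟩ : ∃ j', j = j' + 2 := ⟨j - 2, by omega⟩
      rw [bcoef_succ_succ, ← hFdef, ← mul_assoc, mul_inv_cancel₀ hm0, one_mul]
    have hXeq : PowerSeries.coeff (j + (m - 1)) (F.comp (PowerSeries.X ^ m)) =
        PowerSeries.coeff (j + (m - 1)) (f.comp (PowerSeries.X ^ m)) := by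
      rw [coeff_comp_X_pow F (by omega), coeff_comp_X_pow f (by omega)]
      split_ifs with h
      · exact (hagree _ (div_lt_aux hm hj2)).symm
      · rfl
    have hfj : PowerSeries.coeff j f = bcoef φ m j := by rw [hfdef, PowerSeries.coeff_mk]
    rw [hn', hkey, hFj, sub_zero, hfj, hcj, hXeq]
    ring
end Main3

/-- Existence and uniqueness of the Böttcher coordinate:
for `φ ∈ x^m + x^{m+1}K[[x]]` there is a unique `f ∈ x + x^2K[[x]]`
with `φ(f(x)) = f(x^m)`. -/
theorem bottcher_exists_unique {K : Type*} [Field K] [CharZero K] (m : ℕ) (hm : 2 ≤ m)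
    (φ : PowerSeries K) (hφlow : ∀ k < m, PowerSeries.coeff k φ = 0)
    (hφlead : PowerSeries.coeff m φ = 1) :
    ∃! f : PowerSeries K,
      PowerSeries.coeff 0 f = 0 ∧ PowerSeries.coeff 1 f = 1 ∧
        φ.comp f = f.comp (PowerSeries.X ^ m) := by
  have hf0 : PowerSeries.coeff 0 (PowerSeries.mk (bcoef φ m)) = 0 := by
    rw [PowerSeries.coeff_mk, bcoef_zero]
  have hf1 : PowerSeries.coeff 1 (PowerSeries.mk (bcoef φ m)) = 1 := by
    rw [PowerSeries.coeff_mk, bcoef_one]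
  refine ⟨PowerSeries.mk (bcoef φ m), ⟨hf0, hf1, bsol_eq hm φ hφlow hφlead⟩, ?_⟩
  rintro g ⟨hg0, hg1, hgeq⟩
  exact solutions_agree hm φ hφlow hφlead hg0 hg1 hgeq hf0 hf1 (bsol_eq hm φ hφlow hφlead)
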